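/- Let Z be a random compact set in ℝ^d such that E[V_Z(r₀)] < ∞ for some r₀ > 0. Then E[(V_Z)'_−(r)] < ∞ for all 0 < r. -/

import Mathlib

open MeasureTheory Metric Filter Set TopologicalSpace Measure Module
open scoped Topology ENNReal NNReal

set_option maxHeartbeats 1000000 in
lemma vol_image_le {d : ℕ} (K : ℝ≥0) {f : EuclideanSpace ℝ (Fin d) → EuclideanSpace ℝ (Fin d)}
    {s : Set (EuclideanSpace ℝ (Fin d))} (h : LipschitzOnWith K f s) :
    volume (f '' s) ≤ (K : ℝ≥0∞) ^ (d : ℝ) * volume s := by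
  have hfr : finrank ℝ (EuclideanSpace ℝ (Fin d)) = d := finrank_euclideanSpace_fin
  haveI hHaar : IsAddHaarMeasure (μH[(d:ℝ)] : Measure (EuclideanSpace ℝ (Fin d))) := by
    have h2 := isAddHaarMeasure_hausdorffMeasure (E := EuclideanSpace ℝ (Fin d))
    rw [hfr] at h2; exact h2
  have heq : (μH[(d:ℝ)] : Measure (EuclideanSpace ℝ (Fin d)))
      = addHaarScalarFactor μH[(d:ℝ)] volume • volume :=
    isAddLeftInvariant_eq_smul _ _
  have hc : (0:ℝ≥0) < addHaarScalarFactor (μH[(d:ℝ)] : Measure (EuclideanSpace ℝ (Fin d))) volume :=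
    addHaarScalarFactor_pos_of_isAddHaarMeasure _ _
  have him := h.hausdorffMeasure_image_le (d := (d:ℝ)) (Nat.cast_nonneg d)
  rw [heq] at him
  simp only [Measure.smul_apply, ENNReal.smul_def, smul_eq_mul] at him
  rw [mul_left_comm] at him
  exact (ENNReal.mul_le_mul_iff_right (by exact_mod_cast hc.ne') ENNReal.coe_ne_top).mp him

-- vector inequality
lemma aux_vec {F : Type*} [NormedAddCommGroup F] [InnerProductSpace ℝ F]
    (a b c : F) {l : ℝ} (h0 : 0 ≤ l) (h1 : l ≤ 1)
    (ha : ‖a‖ ≤ ‖a + c‖) (hb : ‖b‖ ≤ ‖b - c‖) :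
    l * ‖c + (a - b)‖ ≤ ‖c + l • (a - b)‖ := by
  set w := a - b with hw
  have key : (l * ‖c + w‖) ^ 2 ≤ ‖c + l • w‖ ^ 2 := by
    have e1 : ‖c + w‖ ^ 2 = ‖c‖ ^ 2 + 2 * inner ℝ c w + ‖w‖ ^ 2 := norm_add_sq_real c w
    have e2 : ‖c + l • w‖ ^ 2 = ‖c‖ ^ 2 + 2 * (l * inner ℝ c w) + l ^ 2 * ‖w‖ ^ 2 := by
      rw [norm_add_sq_real, real_inner_smul_right, norm_smul]
      simp [mul_pow, abs_of_nonneg h0]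
    have hca : (-(‖c‖ ^ 2) / 2 : ℝ) ≤ inner ℝ c a := by
      have := pow_le_pow_left₀ (norm_nonneg a) ha 2
      rw [norm_add_sq_real] at this
      have hic : (inner ℝ a c : ℝ) = inner ℝ c a := (real_inner_comm a c).symm
      nlinarith [this]
    have hcb : (inner ℝ c b : ℝ) ≤ ‖c‖ ^ 2 / 2 := by
      have := pow_le_pow_left₀ (norm_nonneg b) hb 2
      rw [norm_sub_sq_real] at this
      have hic : (inner ℝ b c : ℝ) = inner ℝ c b := (real_inner_comm b c).symm
      nlinarith [this]
    have hcw : (inner ℝ c w : ℝ) = inner ℝ c a - inner ℝ c b := by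
      rw [hw, inner_sub_right]
    have hC : (0:ℝ) ≤ ‖c‖ ^ 2 := by positivity
    have hW : (0:ℝ) ≤ ‖w‖ ^ 2 := by positivity
    rw [mul_pow, e1, e2]
    have hWge : -(‖c‖ ^ 2) ≤ inner ℝ c w := by rw [hcw]; linarith
    nlinarith [mul_nonneg (mul_nonneg h0 (sub_nonneg.mpr h1)) (by linarith : (0:ℝ) ≤ inner ℝ c w + ‖c‖ ^ 2),
      mul_nonneg (mul_nonneg (sub_nonneg.mpr h1) (sub_nonneg.mpr h1)) hC]
  calc l * ‖c + w‖ = |l * ‖c + w‖| := (abs_of_nonneg (by positivity)).symm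
    _ ≤ ‖c + l • w‖ := by
        rw [← Real.sqrt_sq_eq_abs, ← Real.sqrt_sq (norm_nonneg (c + l • w))]
        exact Real.sqrt_le_sqrt key

lemma key_scale {d : ℕ} (Z : Set (EuclideanSpace ℝ (Fin d))) (hne : Z.Nonempty) (hc : IsCompact Z)
    {s r : ℝ} (hs : 0 < s) (hsr : s ≤ r) :
    volume (cthickening r Z) ≤ ENNReal.ofReal ((r/s)^d) * volume (cthickening s Z) := by
  have hr : 0 < r := hs.trans_le hsr
  set l : ℝ := s / r with hl
  have hl0 : 0 < l := div_pos hs hr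
  have hl1 : l ≤ 1 := (div_le_one hr).2 hsr
  choose p hpZ hpd using fun x => hc.exists_infDist_eq_dist hne x
  set Φ : EuclideanSpace ℝ (Fin d) → EuclideanSpace ℝ (Fin d) :=
    fun x => p x + l • (x - p x) with hΦ
  have colip : ∀ x y, l * dist x y ≤ dist (Φ x) (Φ y) := by
    intro x y
    have ha : ‖(x - p x)‖ ≤ ‖(x - p x) + (p x - p y)‖ := by
      have e : (x - p x) + (p x - p y) = x - p y := by abel
      rw [e, ← dist_eq_norm, ← dist_eq_norm, ← hpd x]
      exact infDist_le_dist_of_mem (hpZ y)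
    have hb : ‖(y - p y)‖ ≤ ‖(y - p y) - (p x - p y)‖ := by
      have e : (y - p y) - (p x - p y) = y - p x := by abel
      rw [e, ← dist_eq_norm, ← dist_eq_norm, ← hpd y]
      exact infDist_le_dist_of_mem (hpZ x)
    have := aux_vec (x - p x) (y - p y) (p x - p y) hl0.le hl1 ha hb
    have e1 : (p x - p y) + ((x - p x) - (y - p y)) = x - y := by abel
    have e2 : (p x - p y) + l • ((x - p x) - (y - p y)) = Φ x - Φ y := by
      simp only [hΦ, smul_sub]
      abel
    rw [e1, e2] at this
    rwa [dist_eq_norm, dist_eq_norm]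
  have himg : ∀ x ∈ cthickening r Z, Φ x ∈ cthickening s Z := by
    intro x hx
    apply mem_cthickening_of_dist_le (Φ x) (p x) s Z (hpZ x)
    have e : dist (Φ x) (p x) = l * dist x (p x) := by
      rw [dist_eq_norm, dist_eq_norm]
      have e2 : Φ x - p x = l • (x - p x) := by
        show p x + l • (x - p x) - p x = l • (x - p x); abel
      rw [e2, norm_smul]
      simp [abs_of_nonneg hl0.le]
    have hxr : infDist x Z ≤ r := by
      have h1 : EMetric.infEdist x Z ≤ ENNReal.ofReal r := mem_cthickening_iff.mp hx
      exact ENNReal.toReal_le_of_le_ofReal hr.le h1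
    rw [e, ← hpd x]
    calc l * infDist x Z ≤ l * r :=
          mul_le_mul_of_nonneg_left hxr hl0.le
      _ = s := by rw [hl, div_mul_cancel₀ _ hr.ne']
  set A := cthickening r Z with hA
  have hinj : Set.InjOn Φ A := by
    intro x _ y _ hxy
    have h2 := colip x y
    rw [hxy, dist_self] at h2
    have : dist x y ≤ 0 := nonpos_of_mul_nonpos_right (by linarith) hl0
    exact dist_le_zero.mp (this)
  set ψ := Function.invFunOn Φ A with hψ
  have hKc : ((r/s).toNNReal : ℝ) = r / s := Real.coe_toNNReal _ (by positivity)
  have hK : LipschitzOnWith (r/s).toNNReal ψ (Φ '' A) := by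
    apply LipschitzOnWith.of_dist_le_mul
    rintro u ⟨x, hx, rfl⟩ v ⟨y, hy, rfl⟩
    have h1 : Φ (ψ (Φ x)) = Φ x := Function.invFunOn_eq ⟨x, hx, rfl⟩
    have h2 : Φ (ψ (Φ y)) = Φ y := Function.invFunOn_eq ⟨y, hy, rfl⟩
    have h3 := colip (ψ (Φ x)) (ψ (Φ y))
    rw [h1, h2] at h3
    rw [hKc]
    rw [div_mul_eq_mul_div, le_div_iff₀ hs]
    calc dist (ψ (Φ x)) (ψ (Φ y)) * s = (l * dist (ψ (Φ x)) (ψ (Φ y))) * r := by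
          rw [hl]; field_simp
      _ ≤ dist (Φ x) (Φ y) * r := by
          exact mul_le_mul_of_nonneg_right h3 hr.le
      _ = r * dist (Φ x) (Φ y) := mul_comm _ _
  have hpsi_img : ψ '' (Φ '' A) = A := by
    apply Subset.antisymm
    · rintro _ ⟨_, ⟨x, hx, rfl⟩, rfl⟩
      exact Function.invFunOn_mem ⟨x, hx, rfl⟩
    · intro x hx
      refine ⟨Φ x, ⟨x, hx, rfl⟩, ?_⟩
      have h1 : Φ (ψ (Φ x)) = Φ x := Function.invFunOn_eq ⟨x, hx, rfl⟩
      exact hinj (Function.invFunOn_mem ⟨x, hx, rfl⟩) hx h1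
  calc volume A = volume (ψ '' (Φ '' A)) := by rw [hpsi_img]
    _ ≤ ((r/s).toNNReal : ℝ≥0∞) ^ (d:ℝ) * volume (Φ '' A) := vol_image_le _ hK
    _ ≤ ((r/s).toNNReal : ℝ≥0∞) ^ (d:ℝ) * volume (cthickening s Z) := by
        gcongr
        rintro _ ⟨x, hx, rfl⟩
        exact himg x hx
    _ = ENNReal.ofReal ((r/s)^d) * volume (cthickening s Z) := by
        rw [ENNReal.rpow_natCast]
        congr 1
        rw [← ENNReal.coe_pow, ENNReal.ofReal, Real.toNNReal_pow (by positivity)]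

lemma vol_cthick_lt_top {d : ℕ} (Z : Set (EuclideanSpace ℝ (Fin d))) (hc : IsCompact Z) (t : ℝ) :
    volume (cthickening t Z) < ⊤ :=
  (hc.cthickening).measure_lt_top

lemma toReal_scale {d : ℕ} (Z : Set (EuclideanSpace ℝ (Fin d))) (hne : Z.Nonempty)
    (hc : IsCompact Z) {s r : ℝ} (hs : 0 < s) (hsr : s ≤ r) :
    (volume (cthickening r Z)).toReal ≤ (r/s)^d * (volume (cthickening s Z)).toReal := by
  have h := key_scale Z hne hc hs hsr
  have hfin : ENNReal.ofReal ((r/s)^d) * volume (cthickening s Z) ≠ ⊤ :=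
    ENNReal.mul_ne_top ENNReal.ofReal_ne_top (vol_cthick_lt_top Z hc s).ne
  calc (volume (cthickening r Z)).toReal
      ≤ (ENNReal.ofReal ((r/s)^d) * volume (cthickening s Z)).toReal := ENNReal.toReal_mono hfin h
    _ = (r/s)^d * (volume (cthickening s Z)).toReal := by
        rw [ENNReal.toReal_mul, ENNReal.toReal_ofReal (pow_nonneg (div_nonneg (hs.trans_le hsr).le hs.le) d)]

lemma deriv_bound {d : ℕ} (Z : Set (EuclideanSpace ℝ (Fin d))) (hne : Z.Nonempty)
    (hc : IsCompact Z) {r : ℝ} (hr : 0 < r) :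
    derivWithin (fun s => (volume (cthickening s Z)).toReal) (Set.Iio r) r
      ≤ (volume (cthickening r Z)).toReal * (d / r) := by
  set f : ℝ → ℝ := fun s => (volume (cthickening s Z)).toReal with hf
  by_cases hdiff : DifferentiableWithinAt ℝ f (Set.Iio r) r
  · set L := derivWithin f (Set.Iio r) r with hL
    have hD : HasDerivWithinAt f L (Set.Iio r) r := hdiff.hasDerivWithinAt
    have hslope : Tendsto (slope f r) (𝓝[<] r) (𝓝 L) :=
      (hasDerivWithinAt_iff_tendsto_slope' (notMem_Iio.mpr le_rfl)).mp hD
    -- derivative of u t = (r/t)^d at r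
    set u : ℝ → ℝ := fun t => (r * t⁻¹)^d with hu
    have hv : HasDerivAt (fun t : ℝ => r * t⁻¹) (r * (-(r^2)⁻¹)) r :=
      (hasDerivAt_inv hr.ne').const_mul r
    have hud : HasDerivAt u (-(d / r)) r := by
      have h2 := hv.pow d
      refine h2.congr_deriv ?_
      rw [mul_inv_cancel₀ hr.ne', one_pow]
      field_simp
    have huslope : Tendsto (slope u r) (𝓝[<] r) (𝓝 (-(d / r))) :=
      (hasDerivAt_iff_tendsto_slope.mp hud).mono_left
        (nhdsWithin_mono r (fun x hx => ne_of_lt hx))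
    have hBtend : Tendsto (fun s => f r * (-(slope u r s))) (𝓝[<] r)
        (𝓝 (f r * (d / r))) := by
      have := (huslope.neg).const_mul (f r)
      simpa using this
    have hev : ∀ᶠ s in 𝓝[<] r, slope f r s ≤ f r * (-(slope u r s)) := by
      filter_upwards [Ioo_mem_nhdsLT_of_mem (by constructor <;> [exact hr; exact le_rfl] :
        r ∈ Set.Ioc 0 r)] with s hs
      obtain ⟨hs0, hsr⟩ := hs
      have hfm : f s ≤ f r := by
        apply ENNReal.toReal_mono (vol_cthick_lt_top Z hc r).ne
        exact measure_mono (cthickening_mono hsr.le Z)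
      have hkey : f r ≤ (r/s)^d * f s := toReal_scale Z hne hc hs0 hsr.le
      have hru : (1:ℝ) ≤ (r/s)^d := one_le_pow₀ ((one_le_div hs0).mpr hsr.le)
      have hfs0 : 0 ≤ f s := ENNReal.toReal_nonneg
      have hfr0 : 0 ≤ f r := ENNReal.toReal_nonneg
      have hus : u s = (r/s)^d := by
        show (r * s⁻¹)^d = (r/s)^d
        rw [div_eq_mul_inv]
      have hur : u r = 1 := by
        show (r * r⁻¹)^d = 1
        rw [mul_inv_cancel₀ hr.ne', one_pow]
      set q := (r/s)^d with hq
      rw [slope_def_field, slope_def_field, hus, hur]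
      rw [div_le_iff_of_neg (by linarith : s - r < 0)]
      have hsne : s - r ≠ 0 := by linarith
      have expand : f r * -((q - 1) / (s - r)) * (s - r) = -(f r * (q - 1)) := by
        field_simp
      rw [expand]
      nlinarith [mul_nonneg (sub_nonneg.mpr hru) (sub_nonneg.mpr hfm)]
    have : L ≤ f r * (d / r) := le_of_tendsto_of_tendsto hslope hBtend hev
    exact this
  · rw [derivWithin_zero_of_not_differentiableWithinAt hdiff]
    positivity

theorem stmt_17 (d : ℕ) (Ω : Type*) [MeasureSpace Ω]
    [IsProbabilityMeasure (volume : Measure Ω)]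
    [MeasurableSpace (NonemptyCompacts (EuclideanSpace ℝ (Fin d)))]
    [BorelSpace (NonemptyCompacts (EuclideanSpace ℝ (Fin d)))]
    (Z : Ω → NonemptyCompacts (EuclideanSpace ℝ (Fin d))) (hZ : Measurable Z)
    (r₀ : ℝ) (hr₀ : 0 < r₀)
    (hint : ∫⁻ ω, volume (Metric.cthickening r₀ (Z ω : Set (EuclideanSpace ℝ (Fin d))))
      ∂(volume : Measure Ω) < ⊤) :
    ∀ r : ℝ, 0 < r →
      ∫⁻ ω, ENNReal.ofReal
          (derivWithin
            (fun s : ℝ => (volume (Metric.cthickening s (Z ω : Set (EuclideanSpace ℝ (Fin d))))).toReal)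
            (Set.Iio r) r)
        ∂(volume : Measure Ω) < ⊤ := by
  intro r hr
  set C : ℝ≥0∞ := ENNReal.ofReal (d / r) * ENNReal.ofReal (max 1 (r/r₀)) ^ d with hC
  have hCne : C ≠ ⊤ :=
    ENNReal.mul_ne_top ENNReal.ofReal_ne_top (ENNReal.pow_ne_top ENNReal.ofReal_ne_top)
  have hbound : ∀ ω, ENNReal.ofReal
      (derivWithin
        (fun s : ℝ => (volume (Metric.cthickening s (Z ω : Set (EuclideanSpace ℝ (Fin d))))).toReal)
        (Set.Iio r) r)
      ≤ C * volume (Metric.cthickening r₀ (Z ω : Set (EuclideanSpace ℝ (Fin d)))) := by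
    intro ω
    set W : Set (EuclideanSpace ℝ (Fin d)) := (Z ω : Set (EuclideanSpace ℝ (Fin d))) with hW
    have hne : W.Nonempty := (Z ω).nonempty
    have hcW : IsCompact W := (Z ω).isCompact
    have h1 : ENNReal.ofReal
        (derivWithin (fun s => (volume (cthickening s W)).toReal) (Set.Iio r) r)
        ≤ ENNReal.ofReal ((volume (cthickening r W)).toReal * (d / r)) :=
      ENNReal.ofReal_le_ofReal (deriv_bound W hne hcW hr)
    have h2 : ENNReal.ofReal ((volume (cthickening r W)).toReal * (d / r))
        = ENNReal.ofReal ((volume (cthickening r W)).toReal) * ENNReal.ofReal (d / r) :=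
      ENNReal.ofReal_mul ENNReal.toReal_nonneg
    have h3 : ENNReal.ofReal ((volume (cthickening r W)).toReal) ≤ volume (cthickening r W) :=
      ENNReal.ofReal_toReal_le
    have hone : (1:ℝ≥0∞) ≤ ENNReal.ofReal (max 1 (r/r₀)) ^ d :=
      one_le_pow₀ (by rw [ENNReal.one_le_ofReal]; exact le_max_left _ _)
    have h4 : volume (cthickening r W)
        ≤ ENNReal.ofReal (max 1 (r/r₀)) ^ d * volume (cthickening r₀ W) := by
      rcases le_total r r₀ with h | h
      · calc volume (cthickening r W) ≤ volume (cthickening r₀ W) :=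
              measure_mono (cthickening_mono h W)
          _ ≤ _ := le_mul_of_one_le_left zero_le hone
      · calc volume (cthickening r W)
            ≤ ENNReal.ofReal ((r/r₀)^d) * volume (cthickening r₀ W) :=
              key_scale W hne hcW hr₀ h
          _ ≤ _ := by
              gcongr
              rw [ENNReal.ofReal_pow (div_nonneg hr.le hr₀.le)]
              gcongr
              exact le_max_right _ _
    rw [h2] at h1
    refine h1.trans ?_
    calc ENNReal.ofReal ((volume (cthickening r W)).toReal) * ENNReal.ofReal (d / r)
        ≤ (ENNReal.ofReal (max 1 (r/r₀)) ^ d * volume (cthickening r₀ W))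
            * ENNReal.ofReal (d / r) := mul_le_mul_left (h3.trans h4) _
      _ = C * volume (cthickening r₀ W) := by rw [hC]; ring
  refine lt_of_le_of_lt (lintegral_mono hbound) ?_
  rw [lintegral_const_mul' C _ hCne]
  exact ENNReal.mul_lt_top hCne.lt_top hint
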